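/- If X is a compact Hausdorff space, κ an infinite cardinal, every cellular family in X has cardinality at most κ, and every point p of X admits a weak closed pseudobase with the finite intersection property of cardinality at most κ, then |X| ≤ 2^κ. -/

import Mathlib

open Set Topology Cardinal

universe u

/-- Auxiliary structure: a directed "closure-converging" π-system at every point. -/
structure PiSys (X : Type u) [TopologicalSpace X] (K : Type u) : Type u where
  E : X → Finset K → Set X
  opn : ∀ p t, IsOpen (E p t)
  ne : ∀ p t, (E p t).Nonempty
  mono : ∀ p {t t' : Finset K}, t ⊆ t' → E p t' ⊆ E p t
  memcl : ∀ p t, p ∈ closure (E p t)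
  sep : ∀ p, (⋂ t, closure (E p t)) = {p}
  conv : ∀ p U, IsOpen U → p ∈ U → ∃ t, closure (E p t) ⊆ U

def Centered' {X : Type u} (𝓑 : Set (Set X)) : Prop :=
  ∀ F : Finset (Set X), F.Nonempty → ↑F ⊆ 𝓑 → (⋂₀ (F : Set (Set X))).Nonempty

lemma exists_piSys {X : Type u} [TopologicalSpace X] [CompactSpace X] [Nontrivial X]
    (κ : Cardinal.{u}) (hκ : ℵ₀ ≤ κ)
    (hw : ∀ p : X, ∃ 𝓑 : Set (Set X),
      ((∀ b ∈ 𝓑, IsOpen b) ∧ (⋂ b ∈ 𝓑, closure b) = {p}) ∧ Centered' 𝓑 ∧ #𝓑 ≤ κ) :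
    Nonempty (PiSys X (Quotient.out κ)) := by
  classical
  set K := Quotient.out κ with hK
  have hKcard : #K = κ := Cardinal.mk_out κ
  -- choose pseudobases
  choose 𝓑 h𝓑 hcent hcard using hw
  -- each pseudobase is nonempty
  have hne : ∀ p, (𝓑 p).Nonempty := by
    intro p
    rcases Set.eq_empty_or_nonempty (𝓑 p) with h | h
    · exfalso
      have := (h𝓑 p).2
      rw [h] at this
      simp only [Set.mem_empty_iff_false, Set.iInter_of_empty, Set.iInter_univ] at this
      obtain ⟨x, y, hxy⟩ := exists_pair_ne X
      have hx : x ∈ ({p} : Set X) := this ▸ Set.mem_univ x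
      have hy : y ∈ ({p} : Set X) := this ▸ Set.mem_univ y
      exact hxy (hx.trans hy.symm)
    · exact h
  -- surjections from K onto each pseudobase
  have hsurj : ∀ p, ∃ s : K → Set X, (∀ j, s j ∈ 𝓑 p) ∧ ∀ b ∈ 𝓑 p, ∃ j, s j = b := by
    intro p
    have hle : #(𝓑 p) ≤ #K := by rw [hKcard]; exact hcard p
    obtain ⟨f⟩ := Cardinal.le_def _ _ |>.1 hle
    obtain ⟨b₀, hb₀⟩ := hne p
    set g : K → Set X := fun j =>
      if h : ∃ b : 𝓑 p, f b = j then ((h.choose : 𝓑 p) : Set X) else b₀ with hg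
    refine ⟨g, fun j => ?_, fun b hb => ?_⟩
    · by_cases h : ∃ b : 𝓑 p, f b = j
      · simp only [hg, dif_pos h]; exact (h.choose).2
      · simp only [hg, dif_neg h]; exact hb₀
    · refine ⟨f ⟨b, hb⟩, ?_⟩
      have h : ∃ b' : 𝓑 p, f b' = f ⟨b, hb⟩ := ⟨⟨b, hb⟩, rfl⟩
      simp only [hg, dif_pos h]
      have := f.injective h.choose_spec
      rw [this]
  choose s hs_mem hs_surj using hsurj
  -- the π-system
  have hopn : ∀ p (t : Finset K), IsOpen (⋂ j ∈ t, s p j) := fun p t =>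
    isOpen_biInter_finset fun j _ => (h𝓑 p).1 _ (hs_mem p j)
  have hne2 : ∀ p (t : Finset K), (⋂ j ∈ t, s p j).Nonempty := by
    intro p t
    rcases t.eq_empty_or_nonempty with rfl | ht
    · simp only [Finset.notMem_empty, Set.iInter_of_empty, Set.iInter_univ]
      exact Set.univ_nonempty
    · have himg : ((t.image (s p) : Finset (Set X)) : Set (Set X)) ⊆ 𝓑 p := by
        intro b hb
        simp only [Finset.coe_image, Set.mem_image, Finset.mem_coe] at hb
        obtain ⟨j, _, rfl⟩ := hb
        exact hs_mem p j
      have h1 := hcent p (t.image (s p)) (ht.image _) himg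
      have h2 : ⋂₀ ((t.image (s p) : Finset (Set X)) : Set (Set X)) = ⋂ j ∈ t, s p j := by
        rw [Finset.coe_image, Set.sInter_image]
        simp
      rwa [h2] at h1
  have hmono : ∀ p {t t' : Finset K}, t ⊆ t' →
      (⋂ j ∈ t', s p j) ⊆ ⋂ j ∈ t, s p j := by
    intro p t t' htt
    exact Set.biInter_subset_biInter_left htt
  have hsep : ∀ p, (⋂ t : Finset K, closure (⋂ j ∈ t, s p j)) = {p} := by
    intro p
    set S := ⋂ t : Finset K, closure (⋂ j ∈ t, s p j) with hS
    have hdir : Directed (· ⊇ ·) (fun t : Finset K => closure (⋂ j ∈ t, s p j)) := by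
      intro t t'
      exact ⟨t ∪ t', closure_mono (hmono p Finset.subset_union_left),
        closure_mono (hmono p Finset.subset_union_right)⟩
    have hSne : S.Nonempty := by
      apply IsCompact.nonempty_iInter_of_directed_nonempty_isCompact_isClosed _ hdir
      · exact fun t => (hne2 p t).mono subset_closure
      · exact fun t => isClosed_closure.isCompact
      · exact fun t => isClosed_closure
    have hSsub : S ⊆ {p} := by
      rw [← (h𝓑 p).2]
      intro x hx
      simp only [Set.mem_iInter]
      intro b hb
      obtain ⟨j, rfl⟩ := hs_surj p b hb
      have h1 : S ⊆ closure (⋂ j' ∈ ({j} : Finset K), s p j') := Set.iInter_subset _ _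
      have h2 : (⋂ j' ∈ ({j} : Finset K), s p j') = s p j := by simp
      rw [h2] at h1
      exact h1 hx
    obtain ⟨x, hx⟩ := hSne
    have hxp : x = p := hSsub hx
    exact Set.Subset.antisymm hSsub (by rw [Set.singleton_subset_iff, ← hxp]; exact hx)
  have hmemcl : ∀ p (t : Finset K), p ∈ closure (⋂ j ∈ t, s p j) := by
    intro p t
    have : p ∈ ⋂ t : Finset K, closure (⋂ j ∈ t, s p j) := by
      rw [hsep p]; rfl
    exact Set.mem_iInter.1 this t
  refine ⟨⟨fun p t => ⋂ j ∈ t, s p j, hopn, hne2, hmono, hmemcl, hsep, ?_⟩⟩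
  -- convergence
  intro p U hU hpU
  have hcov : Uᶜ ⊆ ⋃ t : Finset K, (closure (⋂ j ∈ t, s p j))ᶜ := by
    intro x hx
    have hxp : x ≠ p := fun h => hx (h ▸ hpU)
    have : x ∉ (⋂ t : Finset K, closure (⋂ j ∈ t, s p j)) := by
      rw [hsep p]; exact hxp
    simp only [Set.mem_iInter, not_forall] at this
    obtain ⟨t, ht⟩ := this
    exact Set.mem_iUnion.2 ⟨t, ht⟩
  have hcomp : IsCompact (Uᶜ : Set X) := (hU.isClosed_compl).isCompact
  obtain ⟨I, hI⟩ := hcomp.elim_finite_subcover _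
    (fun t : Finset K => isClosed_closure.isOpen_compl) hcov
  refine ⟨I.sup id, ?_⟩
  intro x hx
  by_contra hxU
  have hx' : x ∈ Uᶜ := hxU
  obtain ⟨t, htI, hxt⟩ := by
    have := hI hx'
    simpa only [Set.mem_iUnion, exists_prop] using this
  apply hxt
  have : (⋂ j ∈ I.sup id, s p j) ⊆ ⋂ j ∈ t, s p j := hmono p (Finset.le_sup (f := id) htI)
  exact closure_mono this hx

def IsCellular' {X : Type u} [TopologicalSpace X] (𝓒 : Set (Set X)) : Prop :=
  (∀ c ∈ 𝓒, IsOpen c ∧ c.Nonempty) ∧ 𝓒.PairwiseDisjoint id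

/-- Cellularity refinement: any family of open sets has a ≤κ-subfamily whose union is
dense in the union of the family. -/
lemma cell_refine {X : Type u} [TopologicalSpace X] {κ : Cardinal.{u}}
    (hc : ∀ 𝓒 : Set (Set X), IsCellular' 𝓒 → #𝓒 ≤ κ)
    (𝓐 : Set (Set X)) (h𝓐 : ∀ A ∈ 𝓐, IsOpen A) :
    ∃ ℬ ⊆ 𝓐, #ℬ ≤ κ ∧ ⋃₀ 𝓐 ⊆ closure (⋃₀ ℬ) := by
  classical
  set S : Set (Set (Set X)) :=
    {𝒞 | (∀ c ∈ 𝒞, IsOpen c ∧ c.Nonempty ∧ ∃ A ∈ 𝓐, c ⊆ A) ∧ 𝒞.PairwiseDisjoint id} with hS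
  obtain ⟨𝒞, h𝒞max⟩ := zorn_subset S (by
    intro ch hch hchain
    refine ⟨⋃₀ ch, ⟨?_, ?_⟩, fun s hs => Set.subset_sUnion_of_mem hs⟩
    · intro c hc'
      obtain ⟨𝒟, h𝒟, hc𝒟⟩ := hc'
      exact (hch h𝒟).1 c hc𝒟
    · intro a ha b hb hab
      obtain ⟨𝒟a, h𝒟a, ha'⟩ := ha
      obtain ⟨𝒟b, h𝒟b, hb'⟩ := hb
      rcases hchain.total h𝒟a h𝒟b with h | h
      · exact (hch h𝒟b).2 (h ha') hb' hab
      · exact (hch h𝒟a).2 ha' (h hb') hab)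
  have h𝒞S : 𝒞 ∈ S := h𝒞max.prop
  have h𝒞card : #𝒞 ≤ κ := hc 𝒞 ⟨fun c hc' => ⟨(h𝒞S.1 c hc').1, (h𝒞S.1 c hc').2.1⟩, h𝒞S.2⟩
  -- choose a superset in 𝓐 for each member of 𝒞
  have : ∀ c : 𝒞, ∃ A ∈ 𝓐, (c : Set X) ⊆ A := fun c => (h𝒞S.1 c c.2).2.2
  choose f hf𝓐 hfsub using this
  refine ⟨Set.range f, Set.range_subset_iff.2 hf𝓐, mk_range_le.trans h𝒞card, ?_⟩
  have hsub : ⋃₀ 𝒞 ⊆ ⋃₀ (Set.range f) := by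
    intro x hx
    obtain ⟨c, hc', hxc⟩ := hx
    exact ⟨f ⟨c, hc'⟩, ⟨⟨c, hc'⟩, rfl⟩, hfsub ⟨c, hc'⟩ hxc⟩
  have hdense : ⋃₀ 𝓐 ⊆ closure (⋃₀ 𝒞) := by
    intro x hx
    obtain ⟨A, hA, hxA⟩ := hx
    rw [mem_closure_iff]
    intro U hU hxU
    by_contra hemp
    rw [Set.not_nonempty_iff_eq_empty] at hemp
    set c' := U ∩ A with hc'
    have hc'ne : c'.Nonempty := ⟨x, hxU, hxA⟩
    have hc'disj : ∀ c ∈ 𝒞, Disjoint c' c := by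
      intro c hcmem
      rw [Set.disjoint_iff_inter_eq_empty]
      apply Set.eq_empty_of_subset_empty
      rw [← hemp]
      intro y hy
      exact ⟨hy.1.1, c, hcmem, hy.2⟩
    have hins : insert c' 𝒞 ∈ S := by
      constructor
      · rintro c (rfl | hcmem)
        · exact ⟨hU.inter (h𝓐 A hA), hc'ne, A, hA, Set.inter_subset_right⟩
        · exact h𝒞S.1 c hcmem
      · apply h𝒞S.2.insert
        intro c hcmem hne
        exact hc'disj c hcmem
    have heq : insert c' 𝒞 ⊆ 𝒞 := h𝒞max.2 hins (Set.subset_insert _ _)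
    have hc'mem : c' ∈ 𝒞 := heq (Set.mem_insert _ _)
    have : Disjoint c' c' := hc'disj c' hc'mem
    rw [Set.disjoint_iff_inter_eq_empty, Set.inter_self] at this
    exact hc'ne.ne_empty this
  exact hdense.trans (closure_mono hsub)

section ER
attribute [local instance] Classical.propDecidable
variable {A C : Type u}

/-- realization of a two-sided color type `σ` over `s`, by a point outside `s`. -/
def ERreal (F : A → A → C) (s : Set A) (σ : A → C × C) (x : A) : Prop :=
  x ∉ s ∧ ∀ b ∈ s, (F b x, F x b) = σ b

noncomputable def ERwit (F : A → A → C) [Nonempty A] (s : Set A) (σ : A → C × C) : A :=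
  if h : ∃ x, ERreal F s σ x then h.choose else Classical.arbitrary A

lemma ERwit_real (F : A → A → C) [Nonempty A] {s : Set A} {σ : A → C × C}
    (h : ∃ x, ERreal F s σ x) : ERreal F s σ (ERwit F s σ) := by
  rw [ERwit, dif_pos h]; exact h.choose_spec

lemma ERwit_congr (F : A → A → C) [Nonempty A] {s : Set A} {σ σ' : A → C × C}
    (h : ∀ b ∈ s, σ b = σ' b) : ERwit F s σ = ERwit F s σ' := by
  have he : ERreal F s σ = ERreal F s σ' := by
    funext x
    unfold ERreal
    apply propext
    exact and_congr Iff.rfl (forall₂_congr fun b hb => by rw [h b hb])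
  rw [ERwit, ERwit, he]

noncomputable def ERext [Nonempty C] (s : Set A) (f : s → C × C) : A → C × C :=
  fun a => if h : a ∈ s then f ⟨a, h⟩ else Classical.arbitrary _

/-- the set of witnesses for all small types over `M`. -/
noncomputable def ERwitSet (F : A → A → C) [Nonempty A] [Nonempty C]
    (κ : Cardinal.{u}) (M : Set A) : Set A :=
  Set.range fun q : Σ s : {s : Set A // s ⊆ M ∧ #s ≤ κ}, (↥(s.1) → C × C) =>
    ERwit F q.1.1 (ERext q.1.1 q.2)

lemma ERwit_mem_witSet (F : A → A → C) [Nonempty A] [Nonempty C]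
    {κ : Cardinal.{u}} {M s : Set A} (σ : A → C × C) (hs : s ⊆ M) (hcard : #s ≤ κ) :
    ERwit F s σ ∈ ERwitSet F κ M := by
  refine ⟨⟨⟨s, hs, hcard⟩, fun b => σ b.1⟩, ?_⟩
  apply ERwit_congr
  intro b hb
  simp [ERext, hb]

lemma ERwitSet_card (F : A → A → C) [Nonempty A] [Nonempty C]
    {κ : Cardinal.{u}} (hκ : ℵ₀ ≤ κ) (hC : #C ≤ κ) {M : Set A} (hM : #M ≤ 2 ^ κ) :
    #(ERwitSet F κ M) ≤ 2 ^ κ := by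
  have hκ0 : κ ≠ 0 := (Cardinal.aleph0_pos.trans_le hκ).ne'
  have hκ2 : κ ≤ 2 ^ κ := (Cardinal.cantor κ).le
  have hpow : ((2:Cardinal) ^ κ) ^ κ = 2 ^ κ := by
    rw [← Cardinal.power_mul, Cardinal.mul_eq_self hκ]
  calc #(ERwitSet F κ M)
      ≤ #(Σ s : {s : Set A // s ⊆ M ∧ #s ≤ κ}, (↥(s.1) → C × C)) := Cardinal.mk_range_le
    _ = Cardinal.sum (fun s : {s : Set A // s ⊆ M ∧ #s ≤ κ} => #(↥(s.1) → C × C)) :=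
        Cardinal.mk_sigma _
    _ ≤ Cardinal.sum (fun _ : {s : Set A // s ⊆ M ∧ #s ≤ κ} => 2 ^ κ) := by
        apply Cardinal.sum_le_sum
        intro s
        have h0 : #(↥(s.1) → C × C) = #(C × C) ^ #(↥(s.1)) := (Cardinal.power_def _ _).symm
        have h1 : #(C × C) ≤ κ := by
          have : #(C × C) = #C * #C := by simp
          rw [this]
          calc #C * #C ≤ κ * κ := mul_le_mul' hC hC
            _ = κ := Cardinal.mul_eq_self hκ
        calc #(↥(s.1) → C × C) = #(C × C) ^ #(↥(s.1)) := h0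
          _ ≤ κ ^ #(↥(s.1)) := Cardinal.power_le_power_right h1
          _ ≤ κ ^ κ := Cardinal.power_le_power_left hκ0 s.2.2
          _ ≤ (2 ^ κ) ^ κ := Cardinal.power_le_power_right hκ2
          _ = 2 ^ κ := hpow
    _ = #{s : Set A // s ⊆ M ∧ #s ≤ κ} * 2 ^ κ := Cardinal.sum_const' _ _
    _ ≤ 2 ^ κ * 2 ^ κ := by
        apply mul_le_mul'
        · calc #{s : Set A // s ⊆ M ∧ #s ≤ κ} ≤ max #M ℵ₀ ^ κ := Cardinal.mk_bounded_subset_le _ _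
            _ ≤ (2 ^ κ) ^ κ := Cardinal.power_le_power_right
                (max_le hM (hκ.trans hκ2))
            _ = 2 ^ κ := hpow
        · exact le_rfl
    _ = 2 ^ κ := by
        rw [← Cardinal.power_add, Cardinal.add_eq_self hκ]


section Stages
variable (F : A → A → C) [Nonempty A] [Nonempty C] (κ : Cardinal.{u})

/-- iterated witness-closure stages, indexed by `(κ⁺).ord.ToType`. -/
noncomputable def ERstage : (Order.succ κ).ord.ToType → Set A :=
  WellFounded.fix wellFounded_lt (fun γ IH =>
    ⋃ β : Set.Iio γ, (IH β.1 β.2 ∪ ERwitSet F κ (IH β.1 β.2)))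

lemma ERstage_eq (γ : (Order.succ κ).ord.ToType) :
    ERstage F κ γ =
      ⋃ β : Set.Iio γ, (ERstage F κ β.1 ∪ ERwitSet F κ (ERstage F κ β.1)) := by
  rw [ERstage, WellFounded.fix_eq]

lemma ERstage_mono {γ δ : (Order.succ κ).ord.ToType} (h : γ ≤ δ) :
    ERstage F κ γ ⊆ ERstage F κ δ := by
  rw [ERstage_eq F κ γ, ERstage_eq F κ δ]
  refine Set.iUnion_subset fun β => ?_
  exact Set.subset_iUnion_of_subset ⟨β.1, lt_of_lt_of_le β.2 h⟩ subset_rfl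

lemma ERstage_card (hκ : ℵ₀ ≤ κ) (hC : #C ≤ κ) (γ : (Order.succ κ).ord.ToType) :
    #(ERstage F κ γ) ≤ 2 ^ κ := by
  refine wellFounded_lt.induction (C := fun γ => #(ERstage F κ γ) ≤ 2 ^ κ) γ ?_
  clear γ
  intro γ IH
  rw [ERstage_eq F κ γ]
  have hbound : ∀ β : Set.Iio γ,
      #((ERstage F κ β.1 ∪ ERwitSet F κ (ERstage F κ β.1) : Set A)) ≤ 2 ^ κ := by
    intro β
    refine (Cardinal.mk_union_le _ _).trans ?_
    have h1 := IH β.1 β.2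
    have h2 := ERwitSet_card F hκ hC h1
    calc #(ERstage F κ β.1) + #(ERwitSet F κ (ERstage F κ β.1)) ≤ 2 ^ κ + 2 ^ κ :=
        add_le_add h1 h2
      _ = 2 ^ κ := Cardinal.add_eq_self (hκ.trans (Cardinal.cantor κ).le)
  calc #(⋃ β : Set.Iio γ, (ERstage F κ β.1 ∪ ERwitSet F κ (ERstage F κ β.1)))
      ≤ Cardinal.sum (fun β : Set.Iio γ =>
          #((ERstage F κ β.1 ∪ ERwitSet F κ (ERstage F κ β.1) : Set A))) :=
        Cardinal.mk_iUnion_le_sum_mk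
    _ ≤ Cardinal.sum (fun _ : Set.Iio γ => 2 ^ κ) := Cardinal.sum_le_sum _ _ hbound
    _ = #(Set.Iio γ) * 2 ^ κ := Cardinal.sum_const' _ _
    _ ≤ 2 ^ κ * 2 ^ κ := by
        apply mul_le_mul' _ le_rfl
        have := Cardinal.mk_Iio_ord_toType γ
        exact ((Order.lt_succ_iff.1 this).trans (Cardinal.cantor κ).le)
    _ = 2 ^ κ := Cardinal.mul_eq_self (hκ.trans (Cardinal.cantor κ).le)

/-- the full witness-closed set. -/
noncomputable def ERM : Set A := ⋃ γ, ERstage F κ γ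

lemma ERM_card (hκ : ℵ₀ ≤ κ) (hC : #C ≤ κ) : #(ERM F κ) ≤ 2 ^ κ := by
  calc #(ERM F κ) ≤ Cardinal.sum (fun γ : (Order.succ κ).ord.ToType => #(ERstage F κ γ)) :=
      Cardinal.mk_iUnion_le_sum_mk
    _ ≤ Cardinal.sum (fun _ : (Order.succ κ).ord.ToType => 2 ^ κ) :=
      Cardinal.sum_le_sum _ _ (ERstage_card F κ hκ hC)
    _ = #((Order.succ κ).ord.ToType) * 2 ^ κ := Cardinal.sum_const' _ _
    _ ≤ 2 ^ κ * 2 ^ κ := by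
      apply mul_le_mul' _ le_rfl
      rw [Cardinal.mk_toType, Cardinal.card_ord]
      exact Order.succ_le_of_lt (Cardinal.cantor κ)
    _ = 2 ^ κ := Cardinal.mul_eq_self (hκ.trans (Cardinal.cantor κ).le)

lemma ER_bounded (hκ : ℵ₀ ≤ κ) (S : Set (Order.succ κ).ord.ToType) (hS : #S ≤ κ) :
    ∃ γ, ∀ b ∈ S, b < γ := by
  haveI : IsWellOrder ((Order.succ κ).ord.ToType)
      ((· < ·) : (Order.succ κ).ord.ToType → (Order.succ κ).ord.ToType → Prop) := isWellOrder_lt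
  have h1 : #S < Ordinal.cof (Ordinal.type
      ((· < ·) : (Order.succ κ).ord.ToType → (Order.succ κ).ord.ToType → Prop)) := by
    rw [Ordinal.type_toType, (Cardinal.isRegular_succ hκ).cof_eq]
    exact hS.trans_lt (Order.lt_succ κ)
  by_contra hne
  push_neg at hne
  have hcof : IsCofinal S := fun a => hne a
  exact absurd (lt_of_le_of_lt (Order.cof_le hcof) (by simpa using h1)) (lt_irrefl _)

lemma ERM_closed (hκ : ℵ₀ ≤ κ) {s : Set A} (hsub : s ⊆ ERM F κ) (hcard : #s ≤ κ)
    (σ : A → C × C) : ERwit F s σ ∈ ERM F κ := by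
  -- find a stage containing s
  have hmem : ∀ a : s, ∃ γ, (a : A) ∈ ERstage F κ γ := by
    intro a
    have := hsub a.2
    rwa [ERM, Set.mem_iUnion] at this
  choose g hg using hmem
  obtain ⟨γ₀, hγ₀⟩ := ER_bounded κ hκ (Set.range g) (Cardinal.mk_range_le.trans hcard)
  have hsst : s ⊆ ERstage F κ γ₀ := by
    intro a ha
    exact ERstage_mono F κ (le_of_lt (hγ₀ _ ⟨⟨a, ha⟩, rfl⟩)) (hg ⟨a, ha⟩)
  obtain ⟨δ, hδ⟩ := ER_bounded κ hκ {γ₀} (by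
    rw [Cardinal.mk_singleton]
    exact Cardinal.one_le_aleph0.trans hκ)
  have hγδ : γ₀ < δ := hδ γ₀ rfl
  have hwit : ERwit F s σ ∈ ERwitSet F κ (ERstage F κ γ₀) :=
    ERwit_mem_witSet F σ hsst (hcard)
  have : ERwit F s σ ∈ ERstage F κ δ := by
    rw [ERstage_eq F κ δ]
    exact Set.mem_iUnion.2 ⟨⟨γ₀, hγδ⟩, Or.inr hwit⟩
  exact Set.mem_iUnion.2 ⟨δ, this⟩

end Stages

section Seq
variable (F : A → A → C) [Nonempty A] [Nonempty C] (κ : Cardinal.{u}) (z : A)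

noncomputable def ERseq : (Order.succ κ).ord.ToType → A :=
  WellFounded.fix wellFounded_lt (fun ξ IH =>
    ERwit F {a | ∃ β, ∃ h : β < ξ, IH β h = a} (fun b => (F b z, F z b)))

lemma ERseq_eq (ξ : (Order.succ κ).ord.ToType) :
    ERseq F κ z ξ =
      ERwit F (ERseq F κ z '' Set.Iio ξ) (fun b => (F b z, F z b)) := by
  have hset : {a | ∃ β, ∃ _ : β < ξ, ERseq F κ z β = a} = ERseq F κ z '' Set.Iio ξ := by
    ext a
    constructor
    · rintro ⟨β, h, rfl⟩; exact ⟨β, h, rfl⟩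
    · rintro ⟨β, h, rfl⟩; exact ⟨β, h, rfl⟩
  conv_lhs => rw [ERseq, WellFounded.fix_eq]
  exact congrArg (fun s => ERwit F s (fun b => (F b z, F z b))) hset

lemma ERseq_real (hκ : ℵ₀ ≤ κ) (hz : z ∉ ERM F κ) (ξ : (Order.succ κ).ord.ToType) :
    ERseq F κ z ξ ∈ ERM F κ ∧
      ERreal F (ERseq F κ z '' Set.Iio ξ) (fun b => (F b z, F z b)) (ERseq F κ z ξ) := by
  refine wellFounded_lt.induction
    (C := fun ξ => ERseq F κ z ξ ∈ ERM F κ ∧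
      ERreal F (ERseq F κ z '' Set.Iio ξ) (fun b => (F b z, F z b)) (ERseq F κ z ξ)) ξ ?_
  clear ξ
  intro ξ IH
  set s := ERseq F κ z '' Set.Iio ξ with hs
  have hssub : s ⊆ ERM F κ := by
    rintro a ⟨β, hβ, rfl⟩
    exact (IH β hβ).1
  have hscard : #s ≤ κ := by
    refine Cardinal.mk_image_le.trans ?_
    exact Order.lt_succ_iff.1 (Cardinal.mk_Iio_ord_toType ξ)
  have hex : ∃ x, ERreal F s (fun b => (F b z, F z b)) x :=
    ⟨z, fun hzs => hz (hssub hzs), fun b _ => rfl⟩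
  constructor
  · rw [ERseq_eq]
    exact ERM_closed F κ hκ hssub hscard _
  · rw [ERseq_eq]
    exact ERwit_real F hex

end Seq

/-- A tailored Erdős–Rado style theorem: any coloring of ordered pairs of a set of
size `(2^κ)⁺` by at most `κ` colors has a subset of size `> κ` on which the coloring
takes at most two values. -/
theorem erdosRado {κ : Cardinal.{u}} (hκ : ℵ₀ ≤ κ) [Nonempty C]
    (hA : Order.succ (2 ^ κ) ≤ #A) (hC : #C ≤ κ) (F : A → A → C) :
    ∃ (Y : Set A) (c c' : C), κ < #Y ∧
      ∀ u ∈ Y, ∀ v ∈ Y, u ≠ v → F u v = c ∨ F u v = c' := by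
  haveI : Nonempty A := by
    rw [← Cardinal.mk_ne_zero_iff]
    intro h
    rw [h] at hA
    have h1 : (0:Cardinal) < Order.succ (2 ^ κ) :=
      lt_of_le_of_lt (zero_le) (Order.lt_succ (2 ^ κ))
    exact absurd hA (not_le.2 h1)
  obtain ⟨z, hz⟩ : ∃ z, z ∉ ERM F κ := by
    by_contra h
    push_neg at h
    have huniv : ERM F κ = Set.univ := Set.eq_univ_of_forall h
    have h2 := ERM_card F κ hκ hC
    rw [huniv, Cardinal.mk_univ] at h2
    exact absurd (hA.trans h2) (not_le.2 (Order.lt_succ (2 ^ κ)))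
  have hreal := ERseq_real F κ z hκ hz
  have hmatch : ∀ {η ξ}, η < ξ →
      F (ERseq F κ z η) (ERseq F κ z ξ) = F (ERseq F κ z η) z ∧
      F (ERseq F κ z ξ) (ERseq F κ z η) = F z (ERseq F κ z η) := by
    intro η ξ h
    have h2 := (hreal ξ).2.2 (ERseq F κ z η) ⟨η, h, rfl⟩
    exact ⟨congrArg Prod.fst h2, congrArg Prod.snd h2⟩
  have hinj : ∀ {η ξ}, η < ξ → ERseq F κ z η ≠ ERseq F κ z ξ := by
    intro η ξ h heq
    exact (hreal ξ).2.1 (heq ▸ ⟨η, h, rfl⟩)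
  set G : (Order.succ κ).ord.ToType → C × C :=
    fun η => (F (ERseq F κ z η) z, F z (ERseq F κ z η)) with hG
  obtain ⟨w, hw⟩ : ∃ w : C × C, κ < #(G ⁻¹' {w}) := by
    by_contra h
    push_neg at h
    have hcov : (Set.univ : Set ((Order.succ κ).ord.ToType)) = ⋃ w : C × C, G ⁻¹' {w} := by
      ext η; simp
    have hle : #(Set.univ : Set ((Order.succ κ).ord.ToType)) ≤
        Cardinal.sum (fun w : C × C => #(G ⁻¹' {w})) := by
      rw [hcov]
      exact Cardinal.mk_iUnion_le_sum_mk
    have hle2 : Cardinal.sum (fun w : C × C => #(G ⁻¹' {w})) ≤ κ := by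
      calc Cardinal.sum (fun w : C × C => #(G ⁻¹' {w}))
          ≤ Cardinal.sum (fun _ : C × C => κ) := Cardinal.sum_le_sum _ _ (fun w => h w)
        _ = #(C × C) * κ := Cardinal.sum_const' _ _
        _ ≤ κ * κ := by
            apply mul_le_mul' _ le_rfl
            have : #(C × C) = #C * #C := by simp
            rw [this]
            calc #C * #C ≤ κ * κ := mul_le_mul' hC hC
              _ = κ := Cardinal.mul_eq_self hκ
        _ = κ := Cardinal.mul_eq_self hκ
    rw [Cardinal.mk_univ, Cardinal.mk_toType, Cardinal.card_ord] at hle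
    exact absurd (hle.trans hle2) (not_le.2 (Order.lt_succ κ))
  refine ⟨ERseq F κ z '' (G ⁻¹' {w}), w.1, w.2, ?_, ?_⟩
  · rw [Cardinal.mk_image_eq_of_injOn]
    · exact hw
    · intro η hη ξ hξ heq
      by_contra hne
      rcases lt_or_gt_of_ne hne with h | h
      · exact hinj h heq
      · exact hinj h heq.symm
  · rintro u ⟨η, hη, rfl⟩ v ⟨ξ, hξ, rfl⟩ huv
    have hne : η ≠ ξ := fun h => huv (by rw [h])
    rcases lt_or_gt_of_ne hne with h | h
    · left
      rw [(hmatch h).1]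
      exact congrArg Prod.fst hη
    · right
      rw [(hmatch h).2]
      exact congrArg Prod.snd hξ
end ER

section Density
attribute [local instance] Classical.propDecidable
variable {X : Type u} [TopologicalSpace X]

/-- transfinite sequence of points avoiding the closure of the previous points. -/
noncomputable def DSeq (X : Type u) [TopologicalSpace X] [Nonempty X] (ν : Cardinal.{u}) :
    (Order.succ ν).ord.ToType → X :=
  WellFounded.fix wellFounded_lt (fun α IH =>
    if h : ((closure {x | ∃ β, ∃ hb : β < α, IH β hb = x})ᶜ : Set X).Nonempty then h.choose
    else Classical.arbitrary X)

lemma DSeq_eq [Nonempty X] (ν : Cardinal.{u}) (α : (Order.succ ν).ord.ToType) :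
    DSeq X ν α =
      if h : ((closure (DSeq X ν '' Set.Iio α))ᶜ : Set X).Nonempty then h.choose
      else Classical.arbitrary X := by
  have hset : {x | ∃ β, ∃ _ : β < α, DSeq X ν β = x} = DSeq X ν '' Set.Iio α := by
    ext x
    constructor
    · rintro ⟨β, h, rfl⟩; exact ⟨β, h, rfl⟩
    · rintro ⟨β, h, rfl⟩; exact ⟨β, h, rfl⟩
  conv_lhs => rw [DSeq, WellFounded.fix_eq]
  exact congrArg (fun s : Set X =>
    if h : ((closure s)ᶜ : Set X).Nonempty then h.choose else Classical.arbitrary X) hset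

/-- Main density lemma: there is a dense set of size at most `2 ^ κ`. -/
lemma exists_dense_of_piSys {κ : Cardinal.{u}} (hκ : ℵ₀ ≤ κ)
    (hc : ∀ 𝓒 : Set (Set X), IsCellular' 𝓒 → #𝓒 ≤ κ)
    (P : PiSys X (Quotient.out κ)) :
    ∃ D : Set X, closure D = Set.univ ∧ #D ≤ 2 ^ κ := by
  rcases isEmpty_or_nonempty X with hX | hX
  · refine ⟨∅, ?_, by simp⟩
    rw [closure_empty, Set.univ_eq_empty_iff.2 hX]
  by_contra hD
  push_neg at hD
  set K := Quotient.out κ with hK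
  haveI : Infinite K := Cardinal.infinite_iff.2 (by rw [Cardinal.mk_out]; exact hκ)
  set ν : Cardinal.{u} := 2 ^ κ with hν
  set W := (Order.succ ν).ord.ToType with hW
  -- every initial segment fails to be dense
  have hstep : ∀ α : W, ((closure (DSeq X ν '' Set.Iio α))ᶜ : Set X).Nonempty := by
    intro α
    rcases Set.eq_empty_or_nonempty ((closure (DSeq X ν '' Set.Iio α))ᶜ : Set X) with h | h
    · exfalso
      have hcl : closure (DSeq X ν '' Set.Iio α) = Set.univ := by
        have := compl_empty_iff.1 h
        exact this
      have hcard : #(DSeq X ν '' Set.Iio α) ≤ ν := by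
        refine Cardinal.mk_image_le.trans ?_
        exact Order.lt_succ_iff.1 (Cardinal.mk_Iio_ord_toType α)
      exact absurd hcard (not_le.2 (hD _ hcl))
    · exact h
  have hsep : ∀ α : W, DSeq X ν α ∉ closure (DSeq X ν '' Set.Iio α) := by
    intro α
    have h1 := DSeq_eq (X := X) ν α
    rw [dif_pos (hstep α)] at h1
    have := (hstep α).choose_spec
    rw [← h1] at this
    exact this
  have hmemprev : ∀ {β α : W}, β < α → DSeq X ν β ∈ closure (DSeq X ν '' Set.Iio α) :=
    fun {β α} h => subset_closure ⟨β, h, rfl⟩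
  -- choose converging sets inside the complements
  have hbex : ∀ α : W, ∃ t : Finset K,
      closure (P.E (DSeq X ν α) t) ⊆ ((closure (DSeq X ν '' Set.Iio α))ᶜ : Set X) :=
    fun α => P.conv _ _ (isOpen_compl_iff.2 isClosed_closure) (hsep α)
  choose b hb using hbex
  -- the coloring
  set F : W → W → Finset K := fun β α =>
    if h : ∃ t : Finset K,
        closure (P.E (DSeq X ν β) t) ⊆ ((closure (P.E (DSeq X ν α) (b α)))ᶜ : Set X)
    then h.choose else ∅ with hF
  have hFprop : ∀ {β α : W}, β < α →
      closure (P.E (DSeq X ν β) (F β α)) ⊆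
        ((closure (P.E (DSeq X ν α) (b α)))ᶜ : Set X) := by
    intro β α h
    have hmem : DSeq X ν β ∈ ((closure (P.E (DSeq X ν α) (b α)))ᶜ : Set X) := by
      intro hcon
      exact (hb α hcon) (hmemprev h)
    have hex : ∃ t : Finset K,
        closure (P.E (DSeq X ν β) t) ⊆ ((closure (P.E (DSeq X ν α) (b α)))ᶜ : Set X) :=
      P.conv _ _ (isOpen_compl_iff.2 isClosed_closure) hmem
    simp only [hF, dif_pos hex]
    exact hex.choose_spec
  -- apply Erdős–Rado
  have hA : Order.succ (2 ^ κ) ≤ #W := by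
    rw [hW, Cardinal.mk_toType, Cardinal.card_ord]
  have hC : #(Finset K) ≤ κ := by
    rw [Cardinal.mk_finset_of_infinite, Cardinal.mk_out]
  obtain ⟨Y, c, c', hYcard, hY⟩ := erdosRado hκ hA hC F
  -- the disjoint family
  set d : W → Set X := fun α => P.E (DSeq X ν α) (b α ∪ c ∪ c') with hd
  have hdisj : ∀ u ∈ Y, ∀ v ∈ Y, u ≠ v → d u ∩ d v = ∅ := by
    have key : ∀ {u v : W}, u ∈ Y → v ∈ Y → u < v → d u ∩ d v = ∅ := by
      intro u v hu hv huv
      have hcases := hY u hu v hv (ne_of_lt huv)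
      have hsubF : (F u v : Finset K) ⊆ b u ∪ c ∪ c' := by
        rcases hcases with h | h
        · rw [h]
          exact Finset.subset_union_right.trans Finset.subset_union_left
        · rw [h]
          exact Finset.subset_union_right
      have hdu : d u ⊆ P.E (DSeq X ν u) (F u v) := P.mono _ hsubF
      have hdv : d v ⊆ P.E (DSeq X ν v) (b v) :=
        P.mono _ (Finset.subset_union_left.trans Finset.subset_union_left)
      rw [Set.eq_empty_iff_forall_notMem]
      rintro x ⟨hxu, hxv⟩
      have h1 : x ∈ closure (P.E (DSeq X ν u) (F u v)) := subset_closure (hdu hxu)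
      have h3 := hFprop huv h1
      exact h3 (subset_closure (hdv hxv))
    intro u hu v hv huv
    rcases lt_or_gt_of_ne huv with h | h
    · exact key hu hv h
    · rw [Set.inter_comm]; exact key hv hu h
  set 𝒞 : Set (Set X) := d '' Y with h𝒞
  have hinjOn : Set.InjOn d Y := by
    intro u hu v hv heq
    by_contra hne
    have h1 := hdisj u hu v hv hne
    rw [heq, Set.inter_self] at h1
    exact (P.ne _ _).ne_empty h1
  have hcell : IsCellular' 𝒞 := by
    constructor
    · rintro s ⟨u, hu, rfl⟩
      exact ⟨P.opn _ _, P.ne _ _⟩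
    · rintro s ⟨u, hu, rfl⟩ t ⟨v, hv, rfl⟩ hst
      have hne : u ≠ v := fun h => hst (by rw [h])
      simp only [Function.onFun, id_eq]
      rw [Set.disjoint_iff_inter_eq_empty]
      exact hdisj u hu v hv hne
  have hle := hc 𝒞 hcell
  rw [h𝒞, Cardinal.mk_image_eq_of_injOn _ _ hinjOn] at hle
  exact absurd hle (not_le.2 hYcard)

end Density

section Coding
attribute [local instance] Classical.propDecidable
variable {X : Type u} [TopologicalSpace X]

lemma exists_surj_onto {α K : Type u} {s : Set α} (hone : s.Nonempty) (hle : #s ≤ #K) :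
    ∃ g : K → α, (∀ j, g j ∈ s) ∧ ∀ y ∈ s, ∃ j, g j = y := by
  obtain ⟨f⟩ := Cardinal.le_def _ _ |>.1 hle
  obtain ⟨a₀, ha₀⟩ := hone
  set g : K → α := fun j => if h : ∃ b : s, f b = j then ((h.choose : s) : α) else a₀ with hg
  refine ⟨g, fun j => ?_, fun y hy => ?_⟩
  · by_cases h : ∃ b : s, f b = j
    · simp only [hg, dif_pos h]; exact (h.choose).2
    · simp only [hg, dif_neg h]; exact ha₀
  · refine ⟨f ⟨y, hy⟩, ?_⟩
    have h : ∃ b : s, f b = f ⟨y, hy⟩ := ⟨⟨y, hy⟩, rfl⟩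
    simp only [hg, dif_pos h]
    have := f.injective h.choose_spec
    rw [this]

lemma card_le_of_piSys_dense {κ : Cardinal.{u}} (hκ : ℵ₀ ≤ κ)
    (hc : ∀ 𝓒 : Set (Set X), IsCellular' 𝓒 → #𝓒 ≤ κ)
    (P : PiSys X (Quotient.out κ)) {D : Set X} (hD : closure D = Set.univ)
    (hDcard : #D ≤ 2 ^ κ) : #X ≤ 2 ^ κ := by
  set K := Quotient.out κ with hK
  haveI : Infinite K := Cardinal.infinite_iff.2 (by rw [Cardinal.mk_out]; exact hκ)
  have hDdense : Dense D := by rwa [dense_iff_closure_eq]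
  -- Step A
  have stepA : ∀ (x : X) (t : Finset K), ∃ g : K → (↥D × Finset K),
      closure (⋃ j, P.E ((g j).1 : X) (g j).2) = closure (P.E x t) := by
    intro x t
    set e := P.E x t with he
    -- choose converging sets at points of e ∩ D
    have hτ : ∀ a : ↥(e ∩ D), ∃ τ : Finset K, closure (P.E a.1 τ) ⊆ e :=
      fun a => P.conv a.1 e (P.opn x t) a.2.1
    choose τ hτsub using hτ
    set 𝒢 : Set (Set X) := Set.range (fun a : ↥(e ∩ D) => P.E a.1 (τ a)) with h𝒢
    obtain ⟨ℬ, hℬ𝒢, hℬcard, hℬdense⟩ := cell_refine hc 𝒢 (by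
      rintro A ⟨a, rfl⟩; exact P.opn _ _)
    -- e ∩ D is nonempty
    have heDne : (e ∩ D).Nonempty := hDdense.inter_open_nonempty e (P.opn x t) (P.ne x t)
    obtain ⟨a₀, ha₀⟩ := heDne
    -- ℬ is nonempty
    have hℬne : ℬ.Nonempty := by
      rcases Set.eq_empty_or_nonempty ℬ with h | h
      · exfalso
        have h1 : (P.E a₀ (τ ⟨a₀, ha₀⟩) : Set X) ⊆ closure (⋃₀ ℬ) := by
          refine Set.Subset.trans ?_ hℬdense
          exact Set.subset_sUnion_of_mem ⟨⟨a₀, ha₀⟩, rfl⟩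
        rw [h] at h1
        simp only [Set.sUnion_empty, closure_empty] at h1
        exact (P.ne _ _).ne_empty (Set.subset_empty_iff.1 h1)
      · exact h
    -- choose preimages in 𝒢 for members of ℬ
    have haB : ∀ B : ↥ℬ, ∃ a : ↥(e ∩ D), P.E a.1 (τ a) = B.1 := fun B => hℬ𝒢 B.2
    choose aB haB using haB
    -- surjection K → ℬ
    obtain ⟨g0, hg0mem, hg0sur⟩ := exists_surj_onto (α := Set X) (K := K) hℬne (by
      rw [Cardinal.mk_out]; exact hℬcard)
    set g : K → (↥D × Finset K) := fun j =>
      (⟨(aB ⟨g0 j, hg0mem j⟩).1, (aB ⟨g0 j, hg0mem j⟩).2.2⟩, τ (aB ⟨g0 j, hg0mem j⟩)) with hg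
    refine ⟨g, ?_⟩
    have hunion : (⋃ j, P.E ((g j).1 : X) (g j).2) = ⋃₀ ℬ := by
      apply Set.Subset.antisymm
      · refine Set.iUnion_subset fun j => ?_
        have h1 : P.E ((g j).1 : X) (g j).2 = g0 j := by
          have := haB ⟨g0 j, hg0mem j⟩
          exact this
        rw [h1]
        exact Set.subset_sUnion_of_mem (hg0mem j)
      · rintro y ⟨B, hB, hyB⟩
        obtain ⟨j, rfl⟩ := hg0sur B hB
        refine Set.mem_iUnion.2 ⟨j, ?_⟩
        have h1 : P.E ((g j).1 : X) (g j).2 = g0 j := haB ⟨g0 j, hg0mem j⟩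
        rw [h1]
        exact hyB
    rw [hunion]
    -- closure (⋃₀ ℬ) = closure e
    apply Set.Subset.antisymm
    · -- ⋃₀ ℬ ⊆ e
      have hsub : ⋃₀ ℬ ⊆ closure e := by
        apply Set.sUnion_subset
        intro B hB
        obtain ⟨a, rfl⟩ := hℬ𝒢 hB
        exact (hτsub a).trans subset_closure |>.trans (le_rfl) |> fun h => subset_closure.trans h
      calc closure (⋃₀ ℬ) ⊆ closure (closure e) := closure_mono hsub
        _ = closure e := closure_closure
    · -- closure e ⊆ closure (⋃₀ ℬ)
      have h1 : e ⊆ closure (e ∩ D) := by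
        intro y hy
        rw [mem_closure_iff]
        intro U hU hyU
        have : (U ∩ e).Nonempty := ⟨y, hyU, hy⟩
        obtain ⟨w, hw⟩ := hDdense.inter_open_nonempty (U ∩ e) (hU.inter (P.opn x t)) this
        exact ⟨w, hw.1.1, hw.1.2, hw.2⟩
      have h2 : e ∩ D ⊆ closure (⋃₀ 𝒢) := by
        rintro a ha
        have hmem : a ∈ closure (P.E a (τ ⟨a, ha⟩)) := P.memcl _ _
        have hmemG : P.E a (τ ⟨a, ha⟩) ∈ 𝒢 := ⟨⟨a, ha⟩, rfl⟩
        exact closure_mono (Set.subset_sUnion_of_mem hmemG) hmem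
      have h3 : closure (⋃₀ 𝒢) ⊆ closure (⋃₀ ℬ) := by
        rw [← closure_closure (s := ⋃₀ ℬ)]
        exact closure_mono (hℬdense.trans subset_closure |>.trans le_rfl) |>.trans
          (by rw [closure_closure])
      have : e ⊆ closure (⋃₀ ℬ) :=
        h1.trans ((closure_mono h2).trans (by rw [closure_closure]) |>.trans h3)
      rw [← closure_closure (s := ⋃₀ ℬ)]
      exact closure_mono this
  -- Step B: the coding function
  choose code hcode using stepA
  -- Step C: injectivity
  have hinj : Function.Injective (fun x : X => code x) := by
    intro x y hxy
    have hx : ({x} : Set X) = ({y} : Set X) := by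
      rw [← P.sep x, ← P.sep y]
      have : ∀ t : Finset K, closure (P.E x t) = closure (P.E y t) := by
        intro t
        rw [← hcode x t, ← hcode y t]
        simp only [hxy]
      exact Set.iInter_congr this
    exact Set.singleton_eq_singleton_iff.1 hx
  -- Step D: counting
  have hcount := Cardinal.mk_le_of_injective hinj
  refine hcount.trans ?_
  have h1 : #(Finset K → K → ↥D × Finset K) = (#(↥D × Finset K) ^ #K) ^ #(Finset K) := by
    rw [Cardinal.power_def, Cardinal.power_def]
  rw [h1]
  have hPal : #(↥D × Finset K) ≤ 2 ^ κ := by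
    have : #(↥D × Finset K) = #D * #(Finset K) := by simp
    rw [this, Cardinal.mk_finset_of_infinite, Cardinal.mk_out]
    calc #D * κ ≤ 2 ^ κ * 2 ^ κ := mul_le_mul' hDcard (Cardinal.cantor κ).le
      _ = 2 ^ κ := Cardinal.mul_eq_self (hκ.trans (Cardinal.cantor κ).le)
  have hpow : ((2:Cardinal) ^ κ) ^ κ = 2 ^ κ := by
    rw [← Cardinal.power_mul, Cardinal.mul_eq_self hκ]
  calc (#(↥D × Finset K) ^ #K) ^ #(Finset K)
      ≤ ((2 ^ κ) ^ #K) ^ #(Finset K) :=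
        Cardinal.power_le_power_right (Cardinal.power_le_power_right hPal)
    _ = 2 ^ κ := by
        rw [Cardinal.mk_finset_of_infinite, Cardinal.mk_out, hpow, hpow]

end Coding


/-- A local π-base at `p`: a family of nonempty open sets such that every open
set containing `p` contains a member of the family. -/
def IsLocalPiBase {X : Type u} [TopologicalSpace X] (p : X) (𝓑 : Set (Set X)) : Prop :=
  (∀ b ∈ 𝓑, IsOpen b ∧ b.Nonempty) ∧
  ∀ U : Set X, IsOpen U → p ∈ U → ∃ b ∈ 𝓑, b ⊆ U

/-- A family of sets is centered if it has the finite intersection property. -/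
def Centered {X : Type u} (𝓑 : Set (Set X)) : Prop :=
  ∀ F : Finset (Set X), F.Nonempty → ↑F ⊆ 𝓑 → (⋂₀ (F : Set (Set X))).Nonempty

/-- A family of sets is linked if any two members meet. -/
def Linked {X : Type u} (𝓑 : Set (Set X)) : Prop :=
  ∀ b₁ ∈ 𝓑, ∀ b₂ ∈ 𝓑, (b₁ ∩ b₂).Nonempty

/-- A decreasing local π-base at `p`, given as a ⊆-decreasing sequence of
nonempty open sets. -/
def IsDecreasingLocalPiBase {X : Type u} [TopologicalSpace X] (p : X) (A : ℕ → Set X) : Prop :=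
  (∀ n, IsOpen (A n) ∧ (A n).Nonempty) ∧
  (∀ n, A (n + 1) ⊆ A n) ∧
  ∀ U : Set X, IsOpen U → p ∈ U → ∃ n, A n ⊆ U

/-- A cellular family: pairwise disjoint nonempty open sets. -/
def IsCellular {X : Type u} [TopologicalSpace X] (𝓒 : Set (Set X)) : Prop :=
  (∀ c ∈ 𝓒, IsOpen c ∧ c.Nonempty) ∧ 𝓒.PairwiseDisjoint id

/-- A weak closed pseudobase at `p`: a family of open sets whose closures
intersect exactly in `{p}`. -/
def IsWeakClosedPseudobase {X : Type u} [TopologicalSpace X] (p : X) (𝓑 : Set (Set X)) : Prop :=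
  (∀ b ∈ 𝓑, IsOpen b) ∧ (⋂ b ∈ 𝓑, closure b) = {p}

/-- A neighborhood base at `p` consisting of open sets containing `p`. -/
def IsNhdBase {X : Type u} [TopologicalSpace X] (p : X) (𝓑 : Set (Set X)) : Prop :=
  (∀ b ∈ 𝓑, IsOpen b ∧ p ∈ b) ∧
  ∀ U : Set X, IsOpen U → p ∈ U → ∃ b ∈ 𝓑, b ⊆ U

/-- a compact Hausdorff space with cellularity ≤ κ in which every
point has a weak closed pseudobase with the finite intersection property of
cardinality ≤ κ has cardinality at most 2^κ. -/
theorem compact_card_le_two_pow_of_cellular_and_wPsiCF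
    {X : Type u} [TopologicalSpace X] [CompactSpace X] [T2Space X]
    (κ : Cardinal.{u}) (hκ : ℵ₀ ≤ κ)
    (hc : ∀ 𝓒 : Set (Set X), IsCellular 𝓒 → #𝓒 ≤ κ)
    (hw : ∀ p : X, ∃ 𝓑 : Set (Set X),
      IsWeakClosedPseudobase p 𝓑 ∧ Centered 𝓑 ∧ #𝓑 ≤ κ) :
    #X ≤ 2 ^ κ := by
  rcases subsingleton_or_nontrivial X with hX | hX
  · have h1 : #X ≤ 1 := Cardinal.le_one_iff_subsingleton.2 hX
    have h2 : (1 : Cardinal.{u}) ≤ 2 ^ κ :=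
      Cardinal.one_le_iff_ne_zero.2 (Cardinal.power_ne_zero κ two_ne_zero)
    exact h1.trans h2
  · have hc' : ∀ 𝓒 : Set (Set X), IsCellular' 𝓒 → #𝓒 ≤ κ := fun 𝓒 h => hc 𝓒 ⟨h.1, h.2⟩
    have hw' : ∀ p : X, ∃ 𝓑 : Set (Set X),
        ((∀ b ∈ 𝓑, IsOpen b) ∧ (⋂ b ∈ 𝓑, closure b) = {p}) ∧ Centered' 𝓑 ∧ #𝓑 ≤ κ := by
      intro p
      obtain ⟨B, h1, h2, h3⟩ := hw p
      exact ⟨B, ⟨h1.1, h1.2⟩, h2, h3⟩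
    obtain ⟨P⟩ := exists_piSys κ hκ hw'
    obtain ⟨D, hD, hDcard⟩ := exists_dense_of_piSys hκ hc' P
    exact card_le_of_piSys_dense hκ hc' P hD hDcard
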